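/- Let w ∈ A₂ᵈ on ℝ. For each dyadic interval I set c_I² = |I| · ((w_{I₋} − w_{I₊})/(2w_I))². Then for every dyadic interval J: (1/|J|) ∑_{I ∈ 𝒟(J)} c_I² ≤ 2 log [w]_{A₂ᵈ}; i.e. {c_I²} is a Carleson sequence with constant 2 log [w]_{A₂ᵈ}. -/

import Mathlib

open MeasureTheory Set Filter
noncomputable section

/-- The dyadic interval of generation `n` and position `k`: `[k·2⁻ⁿ, (k+1)·2⁻ⁿ)`. -/
def dI (n k : ℤ) : Set ℝ := Set.Ico ((k : ℝ) * 2 ^ (-n)) (((k : ℝ) + 1) * 2 ^ (-n))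

/-- The length `2⁻ⁿ` of a dyadic interval of generation `n`. -/
def len (n : ℤ) : ℝ := 2 ^ (-n)

/-- The average of `w` over the dyadic interval of generation `n`, position `k`. -/
def avg (w : ℝ → ℝ) (n k : ℤ) : ℝ := (2 : ℝ) ^ (n : ℤ) * ∫ x in dI n k, w x

/-- Average over the left half. -/
def avgL (w : ℝ → ℝ) (n k : ℤ) : ℝ := avg w (n + 1) (2 * k)

/-- Average over the right half. -/
def avgR (w : ℝ → ℝ) (n k : ℤ) : ℝ := avg w (n + 1) (2 * k + 1)

/-- The coefficient `c_I = √|I| (w_{I₋} − w_{I₊})/(2 w_I)`. -/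
def cI (w : ℝ → ℝ) (n k : ℤ) : ℝ :=
  Real.sqrt (len n) * (avgL w n k - avgR w n k) / (2 * avg w n k)

/-- The pointwise inverse `w⁻¹` of a weight. -/
def inv' (w : ℝ → ℝ) : ℝ → ℝ := fun x => (w x)⁻¹

/-- The dyadic A₂ characteristic `[w]_{A₂ᵈ} = sup_Q (⨍_Q w)(⨍_Q w⁻¹)`. -/
def A2d (w : ℝ → ℝ) : ℝ := ⨆ p : ℤ × ℤ, avg w p.1 p.2 * avg (inv' w) p.1 p.2

/-- The Haar function of the dyadic interval of generation `n`, position `k`. -/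
def haar (n k : ℤ) : ℝ → ℝ := fun x =>
  (Real.sqrt (len n))⁻¹ *
    ((dI (n + 1) (2 * k + 1)).indicator (fun _ => (1 : ℝ)) x -
      (dI (n + 1) (2 * k)).indicator (fun _ => (1 : ℝ)) x)

/-- The measure `w dx`. -/
def wMeas (w : ℝ → ℝ) : Measure ℝ := volume.withDensity fun x => ENNReal.ofReal (w x)

/-! ### Auxiliary lemmas -/

lemma len_pos (n : ℤ) : 0 < len n := zpow_pos two_pos _

lemma two_zpow_pos' (n : ℤ) : (0:ℝ) < 2 ^ n := zpow_pos two_pos _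

lemma dI_vol (n k : ℤ) : volume (dI n k) = ENNReal.ofReal (len n) := by
  rw [dI, Real.volume_Ico]
  congr 1
  rw [len]; ring

lemma dI_split (n k : ℤ) : dI (n+1) (2*k) ∪ dI (n+1) (2*k+1) = dI n k := by
  have h2 : (2:ℝ) ^ (-n) = 2 * 2 ^ (-(n+1)) := by
    rw [neg_add, zpow_add₀ (two_ne_zero) (-n) (-1), zpow_neg_one]; ring
  have hp := two_zpow_pos' (-(n+1))
  unfold dI
  push_cast
  rw [Set.Ico_union_Ico_eq_Ico (by nlinarith) (by nlinarith)]
  congr 1 <;> rw [h2] <;> ring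

lemma dI_disj (n k : ℤ) : Disjoint (dI (n+1) (2*k)) (dI (n+1) (2*k+1)) := by
  rw [Set.disjoint_left]
  intro x hx hx'
  simp only [dI, Set.mem_Ico] at hx hx'
  push_cast at hx hx'
  linarith [hx.2, hx'.1]

lemma intOn (w : ℝ → ℝ) (hloc : LocallyIntegrable w volume) (n k : ℤ) :
    IntegrableOn w (dI n k) volume :=
  (hloc.integrableOn_isCompact isCompact_Icc).mono_set Set.Ico_subset_Icc_self

lemma avg_split (w : ℝ → ℝ) (hloc : LocallyIntegrable w volume) (n k : ℤ) :
    avg w n k = (avgL w n k + avgR w n k) / 2 := by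
  unfold avgL avgR avg
  rw [← dI_split n k, setIntegral_union (dI_disj n k) measurableSet_Ico
    (intOn w hloc _ _) (intOn w hloc _ _)]
  have h2 : (2:ℝ) ^ (n+1) = 2 * 2 ^ n := by
    rw [zpow_add₀ (two_ne_zero : (2:ℝ) ≠ 0) n 1]; ring
  rw [h2]; ring

lemma avg_pos (w : ℝ → ℝ) (hpos : ∀ x, 0 < w x) (hloc : LocallyIntegrable w volume)
    (n k : ℤ) : 0 < avg w n k := by
  unfold avg
  apply mul_pos (two_zpow_pos' n)
  rw [setIntegral_pos_iff_support_of_nonneg_ae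
    (Filter.Eventually.of_forall fun x => (hpos x).le) (intOn w hloc n k)]
  have : Function.support w = Set.univ := by
    ext x; simp [Function.support, (hpos x).ne']
  rw [this, Set.univ_inter, dI_vol]
  simp [len_pos n]

lemma cauchy_schwarz_avg (w : ℝ → ℝ) (hpos : ∀ x, 0 < w x) {s : Set ℝ}
    (hw : IntegrableOn w s volume) (hw' : IntegrableOn (fun x => (w x)⁻¹) s volume) :
    ((volume s).toReal) ^ 2 ≤ (∫ x in s, w x) * (∫ x in s, (w x)⁻¹) := by
  set μ := volume.restrict s
  have hmw : AEStronglyMeasurable w μ := hw.aestronglyMeasurable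
  have hmw' : AEStronglyMeasurable (fun x => (w x)⁻¹) μ := hw'.aestronglyMeasurable
  have hconj : Real.HolderConjugate 2 2 := Real.HolderConjugate.two_two
  have hf : MemLp (fun x => Real.sqrt (w x)) (ENNReal.ofReal 2) μ := by
    rw [show ENNReal.ofReal 2 = 2 by norm_num]
    rw [memLp_two_iff_integrable_sq (Real.continuous_sqrt.comp_aestronglyMeasurable hmw)]
    apply hw.congr
    exact Filter.Eventually.of_forall fun x => (Real.sq_sqrt (hpos x).le).symm
  have hg : MemLp (fun x => Real.sqrt ((w x)⁻¹)) (ENNReal.ofReal 2) μ := by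
    rw [show ENNReal.ofReal 2 = 2 by norm_num]
    rw [memLp_two_iff_integrable_sq
      (Real.continuous_sqrt.comp_aestronglyMeasurable hmw')]
    apply hw'.congr
    exact Filter.Eventually.of_forall fun x =>
      (Real.sq_sqrt (inv_nonneg.mpr (hpos x).le)).symm
  have hCS := integral_mul_le_Lp_mul_Lq_of_nonneg hconj
    (Filter.Eventually.of_forall fun x => Real.sqrt_nonneg _)
    (Filter.Eventually.of_forall fun x => Real.sqrt_nonneg _) hf hg
  have hprod : ∀ x, Real.sqrt (w x) * Real.sqrt ((w x)⁻¹) = 1 := by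
    intro x
    rw [← Real.sqrt_mul (hpos x).le, mul_inv_cancel₀ (hpos x).ne', Real.sqrt_one]
  have hleft : ∫ x, Real.sqrt (w x) * Real.sqrt ((w x)⁻¹) ∂μ = (volume s).toReal := by
    simp only [hprod]
    simp [μ, Measure.restrict_apply_univ, Measure.real]
  have hf2 : ∀ x, Real.sqrt (w x) ^ (2:ℝ) = w x := fun x => by
    rw [Real.rpow_two, Real.sq_sqrt (hpos x).le]
  have hg2 : ∀ x, Real.sqrt ((w x)⁻¹) ^ (2:ℝ) = (w x)⁻¹ := fun x => by
    rw [Real.rpow_two, Real.sq_sqrt (inv_nonneg.mpr (hpos x).le)]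
  simp only [hleft, hf2, hg2] at hCS
  set a := ∫ x, w x ∂μ
  set b := ∫ x, (w x)⁻¹ ∂μ
  have ha : 0 ≤ a := integral_nonneg fun x => (hpos x).le
  have hb : 0 ≤ b := integral_nonneg fun x => inv_nonneg.mpr (hpos x).le
  have hsq : (a ^ (1/2:ℝ) * b ^ (1/2:ℝ)) ^ 2 = a * b := by
    rw [mul_pow, ← Real.rpow_natCast (a ^ (1/2:ℝ)) 2, ← Real.rpow_natCast (b ^ (1/2:ℝ)) 2,
      ← Real.rpow_mul ha, ← Real.rpow_mul hb]
    norm_num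
  calc ((volume s).toReal) ^ 2 ≤ (a ^ (1/2:ℝ) * b ^ (1/2:ℝ)) ^ 2 :=
        pow_le_pow_left₀ ENNReal.toReal_nonneg hCS 2
    _ = a * b := hsq

lemma one_le_avg_mul (w : ℝ → ℝ) (hpos : ∀ x, 0 < w x)
    (hloc : LocallyIntegrable w volume) (hloc' : LocallyIntegrable (inv' w) volume)
    (n k : ℤ) : 1 ≤ avg w n k * avg (inv' w) n k := by
  have hCS := cauchy_schwarz_avg w hpos (intOn w hloc n k) (intOn (inv' w) hloc' n k)
  rw [dI_vol, ENNReal.toReal_ofReal (len_pos n).le] at hCS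
  have he : (2:ℝ) ^ n * len n = 1 := by
    rw [len, ← zpow_add₀ (two_ne_zero : (2:ℝ) ≠ 0)]; simp
  have h2 := mul_le_mul_of_nonneg_left hCS (sq_nonneg ((2:ℝ) ^ n))
  unfold avg inv'
  nlinarith [h2, he]

/-- The Bellman function `φ(I) = |I| log(w_I (w⁻¹)_I)`. -/
def Phi (w : ℝ → ℝ) (p : ℤ × ℤ) : ℝ :=
  len p.1 * Real.log (avg w p.1 p.2 * avg (inv' w) p.1 p.2)

/-- The Bellman defect of the dyadic interval `p`. -/
def dd (w : ℝ → ℝ) (p : ℤ × ℤ) : ℝ :=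
  Phi w p - Phi w (p.1 + 1, 2 * p.2) - Phi w (p.1 + 1, 2 * p.2 + 1)

lemma Phi_nonneg (w : ℝ → ℝ) (hpos : ∀ x, 0 < w x)
    (hloc : LocallyIntegrable w volume) (hloc' : LocallyIntegrable (inv' w) volume)
    (p : ℤ × ℤ) : 0 ≤ Phi w p :=
  mul_nonneg (len_pos _).le (Real.log_nonneg (one_le_avg_mul w hpos hloc hloc' _ _))

lemma key_real_ineq {u um up v vm vp : ℝ} (hu : 0 < u) (hum : 0 < um) (hup : 0 < up)
    (hv : 0 < v) (hvm : 0 < vm) (hvp : 0 < vp)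
    (hus : u = (um + up) / 2) (hvs : v = (vm + vp) / 2) :
    ((um - up) / (2 * u)) ^ 2 ≤
      2 * (Real.log (u * v) - (Real.log (um * vm) + Real.log (up * vp)) / 2) := by
  set t := (um - up) / (2 * u) with ht
  set s := (vm - vp) / (2 * v) with hs
  have htu : u * t = (um - up) / 2 := by
    rw [ht]; field_simp
  have hsv : v * s = (vm - vp) / 2 := by
    rw [hs]; field_simp
  have hut : um * up = u ^ 2 * (1 - t ^ 2) := by
    linear_combination (u * t + (um - up) / 2) * htu - (u + (um + up) / 2) * hus
  have hvt : vm * vp = v ^ 2 * (1 - s ^ 2) := by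
    linear_combination (v * s + (vm - vp) / 2) * hsv - (v + (vm + vp) / 2) * hvs
  have ht1 : 0 < 1 - t ^ 2 := by nlinarith [mul_pos hum hup]
  have hs1 : 0 < 1 - s ^ 2 := by nlinarith [mul_pos hvm hvp]
  have hlu : Real.log um + Real.log up = 2 * Real.log u + Real.log (1 - t ^ 2) := by
    rw [← Real.log_mul hum.ne' hup.ne', hut, Real.log_mul (by positivity) ht1.ne',
      Real.log_pow]
    push_cast; ring
  have hlv : Real.log vm + Real.log vp = 2 * Real.log v + Real.log (1 - s ^ 2) := by
    rw [← Real.log_mul hvm.ne' hvp.ne', hvt, Real.log_mul (by positivity) hs1.ne',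
      Real.log_pow]
    push_cast; ring
  have hlt : Real.log (1 - t ^ 2) ≤ -t ^ 2 := by
    have := Real.log_le_sub_one_of_pos ht1; linarith
  have hls : Real.log (1 - s ^ 2) ≤ -s ^ 2 := by
    have := Real.log_le_sub_one_of_pos hs1; linarith
  rw [Real.log_mul hu.ne' hv.ne', Real.log_mul hum.ne' hvm.ne',
    Real.log_mul hup.ne' hvp.ne']
  nlinarith [sq_nonneg s]

lemma dd_key (w : ℝ → ℝ) (hpos : ∀ x, 0 < w x)
    (hloc : LocallyIntegrable w volume) (hloc' : LocallyIntegrable (inv' w) volume)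
    (m j : ℤ) :
    len m * ((avgL w m j - avgR w m j) / (2 * avg w m j)) ^ 2 ≤ 2 * dd w (m, j) := by
  have hpos' : ∀ x, 0 < inv' w x := fun x => inv_pos.mpr (hpos x)
  have hu := avg_pos w hpos hloc m j
  have hum := avg_pos w hpos hloc (m+1) (2*j)
  have hup := avg_pos w hpos hloc (m+1) (2*j+1)
  have hv := avg_pos (inv' w) hpos' hloc' m j
  have hvm := avg_pos (inv' w) hpos' hloc' (m+1) (2*j)
  have hvp := avg_pos (inv' w) hpos' hloc' (m+1) (2*j+1)
  have hkey := key_real_ineq hu hum hup hv hvm hvp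
    (avg_split w hloc m j) (avg_split (inv' w) hloc' m j)
  have hlen : len (m + 1) = len m / 2 := by
    rw [len, len, neg_add, zpow_add₀ (two_ne_zero : (2:ℝ) ≠ 0), zpow_neg_one]
    ring
  have h := mul_le_mul_of_nonneg_left hkey (len_pos m).le
  unfold dd Phi avgL avgR at *
  simp only at h ⊢
  rw [hlen]
  linarith [h]

lemma dd_nonneg (w : ℝ → ℝ) (hpos : ∀ x, 0 < w x)
    (hloc : LocallyIntegrable w volume) (hloc' : LocallyIntegrable (inv' w) volume)
    (p : ℤ × ℤ) : 0 ≤ dd w p := by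
  have h := dd_key w hpos hloc hloc' p.1 p.2
  have h0 : 0 ≤ len p.1 * ((avgL w p.1 p.2 - avgR w p.1 p.2) / (2 * avg w p.1 p.2)) ^ 2 :=
    mul_nonneg (len_pos _).le (sq_nonneg _)
  linarith

lemma sum_even_odd (A B : ℤ) (f : ℤ → ℝ) :
    ∑ j ∈ Finset.Ico A B, (f (2 * j) + f (2 * j + 1)) =
      ∑ j ∈ Finset.Ico (2 * A) (2 * B), f j := by
  have hset : Finset.Ico (2 * A) (2 * B) =
      ((Finset.Ico A B).image (fun j => 2 * j)) ∪
        ((Finset.Ico A B).image (fun j => 2 * j + 1)) := by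
    ext x
    simp only [Finset.mem_Ico, Finset.mem_union, Finset.mem_image]
    constructor
    · intro h
      rcases Int.even_or_odd x with ⟨m, hm⟩ | ⟨m, hm⟩
      · exact Or.inl ⟨m, by omega, by omega⟩
      · exact Or.inr ⟨m, by omega, by omega⟩
    · rintro (⟨m, hm, rfl⟩ | ⟨m, hm, rfl⟩) <;> omega
  have hdisj : Disjoint ((Finset.Ico A B).image (fun j => 2 * j))
      ((Finset.Ico A B).image (fun j => 2 * j + 1)) := by
    rw [Finset.disjoint_left]
    intro a ha hb
    simp only [Finset.mem_image] at ha hb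
    obtain ⟨m, _, hm⟩ := ha
    obtain ⟨m', _, hm'⟩ := hb
    omega
  rw [hset, Finset.sum_union hdisj,
    Finset.sum_image (fun a _ b _ h => by omega),
    Finset.sum_image (fun a _ b _ h => by omega), ← Finset.sum_add_distrib]

lemma telescope (G : ℤ → ℝ) (n : ℤ) (M : ℕ) :
    ∑ m ∈ Finset.Ico n (n + M), (G m - G (m + 1)) = G n - G (n + M) := by
  induction M with
  | zero => simp
  | succ M ih =>
    have h : Finset.Ico n (n + (M + 1 : ℕ)) = insert (n + M) (Finset.Ico n (n + M)) := by
      ext x; simp only [Finset.mem_Ico, Finset.mem_insert]; omega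
    rw [h, Finset.sum_insert (by simp), ih,
      show n + ((M:ℕ)+1:ℕ) = (n + M) + 1 from by push_cast; ring]
    ring

lemma dI_subset_iff {m j n k : ℤ} (h : dI m j ⊆ dI n k) :
    n ≤ m ∧ k * 2 ^ (m - n).toNat ≤ j ∧ j + 1 ≤ (k + 1) * 2 ^ (m - n).toNat := by
  have hm : (0:ℝ) < 2 ^ (-m) := zpow_pos two_pos _
  have hn : (0:ℝ) < 2 ^ (-n) := zpow_pos two_pos _
  have hlt : (j:ℝ) * 2 ^ (-m) < ((j:ℝ) + 1) * 2 ^ (-m) := by nlinarith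
  rw [dI, dI, Set.Ico_subset_Ico_iff hlt] at h
  obtain ⟨h1, h2⟩ := h
  have hnm : n ≤ m := by
    by_contra hc
    push_neg at hc
    have : (2:ℝ) ^ (-n) < 2 ^ (-m) := by
      apply zpow_lt_zpow_right₀ one_lt_two; omega
    nlinarith
  have e1 : (2:ℝ) ^ (-m) * 2 ^ m = 1 := by
    rw [← zpow_add₀ (two_ne_zero : (2:ℝ) ≠ 0)]; simp
  have e2 : (2:ℝ) ^ (-n) * 2 ^ m = ((2 ^ (m - n).toNat : ℤ) : ℝ) := by
    push_cast
    rw [← zpow_natCast (2:ℝ), ← zpow_add₀ (two_ne_zero : (2:ℝ) ≠ 0)]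
    congr 1; omega
  have hmp : (0:ℝ) ≤ 2 ^ m := (zpow_pos two_pos m).le
  refine ⟨hnm, ?_, ?_⟩
  · have h1' := mul_le_mul_of_nonneg_right h1 hmp
    rw [mul_assoc, mul_assoc, e1, e2, mul_one] at h1'
    exact_mod_cast h1'
  · have h2' := mul_le_mul_of_nonneg_right h2 hmp
    rw [mul_assoc, mul_assoc, e1, e2, mul_one] at h2'
    exact_mod_cast h2'

lemma sum_dd_le (w : ℝ → ℝ) (hpos : ∀ x, 0 < w x)
    (hloc : LocallyIntegrable w volume) (hloc' : LocallyIntegrable (inv' w) volume)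
    (n k : ℤ) (S : Finset (ℤ × ℤ)) (hS : ∀ p ∈ S, dI p.1 p.2 ⊆ dI n k) :
    ∑ p ∈ S, dd w p ≤ Phi w (n, k) := by
  obtain ⟨N0, hN0⟩ := (S.image Prod.fst).exists_le
  set M : ℕ := (N0 + 1 - n).toNat with hM
  set A : ℤ → ℤ := fun m => k * 2 ^ (m - n).toNat with hA
  set B : ℤ → ℤ := fun m => (k + 1) * 2 ^ (m - n).toNat with hB
  set G : ℤ → ℝ := fun m => ∑ j ∈ Finset.Ico (A m) (B m), Phi w (m, j) with hG
  have hGnn : ∀ m, 0 ≤ G m := fun m =>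
    Finset.sum_nonneg fun j _ => Phi_nonneg w hpos hloc hloc' _
  have hlevel : ∀ m, n ≤ m →
      ∑ j ∈ Finset.Ico (A m) (B m), dd w (m, j) = G m - G (m + 1) := by
    intro m hm
    have hA1 : A (m + 1) = 2 * A m := by
      simp only [hA]
      rw [show (m + 1 - n).toNat = (m - n).toNat + 1 by omega, pow_succ]
      ring
    have hB1 : B (m + 1) = 2 * B m := by
      simp only [hB]
      rw [show (m + 1 - n).toNat = (m - n).toNat + 1 by omega, pow_succ]
      ring
    have : ∑ j ∈ Finset.Ico (A m) (B m), dd w (m, j) =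
        (∑ j ∈ Finset.Ico (A m) (B m), Phi w (m, j)) -
          ∑ j ∈ Finset.Ico (A m) (B m),
            (Phi w (m + 1, 2 * j) + Phi w (m + 1, 2 * j + 1)) := by
      rw [← Finset.sum_sub_distrib]
      refine Finset.sum_congr rfl fun j _ => ?_
      simp only [dd]
      ring
    rw [this, sum_even_odd (A m) (B m) (fun j => Phi w (m + 1, j)), ← hA1, ← hB1]
  have hGn : G n = Phi w (n, k) := by
    have hAn : A n = k := by simp [hA]
    have hBn : B n = k + 1 := by simp [hB]
    have : Finset.Ico (A n) (B n) = {k} := by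
      rw [hAn, hBn]
      ext x; simp only [Finset.mem_Ico, Finset.mem_singleton]; omega
    rw [hG]
    simp only [this, Finset.sum_singleton]
  set T : Finset (ℤ × ℤ) := (Finset.Ico n (n + M)).biUnion
    (fun m => (Finset.Ico (A m) (B m)).image (fun j => (m, j))) with hT
  have hST : S ⊆ T := by
    intro p hp
    obtain ⟨h1, h2, h3⟩ := dI_subset_iff (hS p hp)
    have hple : p.1 ≤ N0 := hN0 p.1 (Finset.mem_image_of_mem Prod.fst hp)
    rw [hT, Finset.mem_biUnion]
    refine ⟨p.1, ?_, ?_⟩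
    · rw [Finset.mem_Ico]
      refine ⟨h1, ?_⟩
      have hM2 : ((N0 + 1 - n).toNat : ℤ) = (M : ℤ) := by rw [hM]
      omega
    · rw [Finset.mem_image]
      refine ⟨p.2, ?_, by simp⟩
      rw [Finset.mem_Ico]
      have hAp : A p.1 = k * 2 ^ (p.1 - n).toNat := rfl
      have hBp : B p.1 = (k + 1) * 2 ^ (p.1 - n).toNat := rfl
      omega
  have hstep1 : ∑ p ∈ S, dd w p ≤ ∑ p ∈ T, dd w p :=
    Finset.sum_le_sum_of_subset_of_nonneg hST
      (fun p _ _ => dd_nonneg w hpos hloc hloc' p)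
  have hdisjT : (↑(Finset.Ico n (n + M)) : Set ℤ).PairwiseDisjoint
      (fun m => (Finset.Ico (A m) (B m)).image (fun j => (m, j))) := by
    intro a _ b _ hab
    simp only [Function.onFun]
    rw [Finset.disjoint_left]
    intro p hpa hpb
    simp only [Finset.mem_image] at hpa hpb
    obtain ⟨x, _, hx⟩ := hpa
    obtain ⟨y, _, hy⟩ := hpb
    apply hab
    rw [← hx] at hy
    exact (congrArg Prod.fst hy).symm
  have hstep2 : ∑ p ∈ T, dd w p =
      ∑ m ∈ Finset.Ico n (n + M), ∑ j ∈ Finset.Ico (A m) (B m), dd w (m, j) := by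
    rw [hT, Finset.sum_biUnion hdisjT]
    refine Finset.sum_congr rfl fun m _ => ?_
    rw [Finset.sum_image (fun a _ b _ h => by simpa using (congrArg Prod.snd h))]
  have hstep3 : ∑ m ∈ Finset.Ico n (n + M),
      ∑ j ∈ Finset.Ico (A m) (B m), dd w (m, j) = G n - G (n + M) := by
    rw [← telescope G n M]
    refine Finset.sum_congr rfl fun m hm => ?_
    rw [Finset.mem_Ico] at hm
    exact hlevel m hm.1
  calc ∑ p ∈ S, dd w p ≤ G n - G (n + M) := by
        rw [← hstep3, ← hstep2]; exact hstep1
    _ ≤ G n := by linarith [hGnn (n + M)]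
    _ = Phi w (n, k) := hGn

/-- `{c_I²}` is a Carleson sequence with constant `2 log [w]_{A₂ᵈ}`. -/
theorem cI_sq_carleson (w : ℝ → ℝ) (hpos : ∀ x, 0 < w x)
    (hloc : LocallyIntegrable w volume) (hloc' : LocallyIntegrable (inv' w) volume)
    (hbdd : BddAbove (Set.range fun p : ℤ × ℤ => avg w p.1 p.2 * avg (inv' w) p.1 p.2))
    (n k : ℤ) :
    (len n)⁻¹ * ∑' I : {p : ℤ × ℤ // dI p.1 p.2 ⊆ dI n k},
        len I.1.1 * ((avgL w I.1.1 I.1.2 - avgR w I.1.1 I.1.2) / (2 * avg w I.1.1 I.1.2)) ^ 2 ≤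
      2 * Real.log (A2d w) := by
  have hlogA : 0 ≤ Real.log (A2d w) := by
    apply Real.log_nonneg
    calc (1:ℝ) ≤ avg w 0 0 * avg (inv' w) 0 0 := one_le_avg_mul w hpos hloc hloc' 0 0
      _ ≤ A2d w := le_ciSup hbdd (0, 0)
  have hPhiA : Phi w (n, k) ≤ len n * Real.log (A2d w) := by
    apply mul_le_mul_of_nonneg_left _ (len_pos n).le
    apply Real.log_le_log
    · exact lt_of_lt_of_le one_pos (one_le_avg_mul w hpos hloc hloc' n k)
    · exact le_ciSup hbdd (n, k)
  have htsum : ∑' I : {p : ℤ × ℤ // dI p.1 p.2 ⊆ dI n k},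
      len I.1.1 * ((avgL w I.1.1 I.1.2 - avgR w I.1.1 I.1.2) / (2 * avg w I.1.1 I.1.2)) ^ 2 ≤
        len n * (2 * Real.log (A2d w)) := by
    apply tsum_le_of_sum_le'
    · exact mul_nonneg (len_pos n).le (by linarith)
    · intro s
      set S : Finset (ℤ × ℤ) := s.image Subtype.val with hSdef
      have hS : ∀ p ∈ S, dI p.1 p.2 ⊆ dI n k := by
        intro p hp
        rw [hSdef, Finset.mem_image] at hp
        obtain ⟨I, _, hI⟩ := hp
        rw [← hI]
        exact I.2
      have heq : ∑ I ∈ s, len I.1.1 *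
          ((avgL w I.1.1 I.1.2 - avgR w I.1.1 I.1.2) / (2 * avg w I.1.1 I.1.2)) ^ 2 =
          ∑ p ∈ S, len p.1 *
            ((avgL w p.1 p.2 - avgR w p.1 p.2) / (2 * avg w p.1 p.2)) ^ 2 := by
        rw [hSdef, Finset.sum_image (fun a _ b _ h => Subtype.ext h)]
      rw [heq]
      calc ∑ p ∈ S, len p.1 *
            ((avgL w p.1 p.2 - avgR w p.1 p.2) / (2 * avg w p.1 p.2)) ^ 2
          ≤ ∑ p ∈ S, 2 * dd w p :=
            Finset.sum_le_sum fun p _ => dd_key w hpos hloc hloc' p.1 p.2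
        _ = 2 * ∑ p ∈ S, dd w p := by rw [Finset.mul_sum]
        _ ≤ 2 * Phi w (n, k) := by
            have := sum_dd_le w hpos hloc hloc' n k S hS
            linarith
        _ ≤ 2 * (len n * Real.log (A2d w)) := by linarith [hPhiA]
        _ = len n * (2 * Real.log (A2d w)) := by ring
  calc (len n)⁻¹ * ∑' I : {p : ℤ × ℤ // dI p.1 p.2 ⊆ dI n k},
        len I.1.1 * ((avgL w I.1.1 I.1.2 - avgR w I.1.1 I.1.2) / (2 * avg w I.1.1 I.1.2)) ^ 2
      ≤ (len n)⁻¹ * (len n * (2 * Real.log (A2d w))) :=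
        mul_le_mul_of_nonneg_left htsum (inv_nonneg.mpr (len_pos n).le)
    _ = 2 * Real.log (A2d w) := by
        rw [← mul_assoc, inv_mul_cancel₀ (len_pos n).ne', one_mul]
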